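/- Vanishing of martingales with vanishing characteristic on time scales: Let 𝕋 be a bounded time scale with minimum 0 and maximum b ∈ 𝕋, and let Z = (Z_t)_{t∈𝕋} be a right-continuous square-integrable martingale with respect to a filtration (ℱ_t)_{t∈𝕋} on a probability space (Ω, 𝒜, P) such that Z_0 = 0 almost surely and Z² = (Z_t²)_{t∈𝕋} is also a martingale. Then P[Z_t = 0 for all t ∈ 𝕋] = 1, i.e. Z is indistinguishable from the zero process. -/

import Mathlib

open MeasureTheory Filter Topology

/-- Vanishing of martingales with vanishing characteristic on time scales: if `Z` is a
right-continuous square-integrable martingale on a bounded time scale `T` (min `0`,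
max `b`) with `Z_0 = 0` a.s. and `Z²` is also a martingale, then `Z` is
indistinguishable from the zero process. -/
theorem stmt_6 (T : Set ℝ) (hcl : IsClosed T) (b : ℝ) (h0T : (0 : ℝ) ∈ T) (hbT : b ∈ T)
    (hsub : T ⊆ Set.Icc 0 b)
    {Ω : Type*} {mΩ : MeasurableSpace Ω} (P : Measure Ω) [IsProbabilityMeasure P]
    (ℱ : Filtration ↥T mΩ) (Z : ↥T → Ω → ℝ)
    (hZ : Martingale Z ℱ P)
    (hsq : ∀ t : ↥T, MemLp (Z t) 2 P)
    (hrc : ∀ ω, ∀ t : ↥T, ContinuousWithinAt (fun s : ↥T => Z s ω) (Set.Ici t) t)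
    (hZ0 : Z ⟨0, h0T⟩ =ᵐ[P] 0)
    (hZ2 : Martingale (fun t ω => (Z t ω) ^ 2) ℱ P) :
    ∀ᵐ ω ∂P, ∀ t : ↥T, Z t ω = 0 := by
  -- Step 1: for each fixed `t`, `Z t = 0` a.e.
  have key : ∀ t : ↥T, ∀ᵐ ω ∂P, Z t ω = 0 := by
    intro t
    have hle : (⟨0, h0T⟩ : ↥T) ≤ t := Subtype.coe_le_coe.mp (hsub t.2).1
    have hset := hZ2.setIntegral_eq hle (MeasurableSet.univ)
    rw [setIntegral_univ, setIntegral_univ] at hset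
    have hint0 : ∫ ω, Z ⟨0, h0T⟩ ω ^ 2 ∂P = 0 := by
      have : (fun ω => Z ⟨0, h0T⟩ ω ^ 2) =ᵐ[P] 0 := by
        filter_upwards [hZ0] with ω h
        simp [h]
      rw [integral_congr_ae this]; simp
    have hintt : ∫ ω, Z t ω ^ 2 ∂P = 0 := by rw [← hset, hint0]
    have hnn : (0 : Ω → ℝ) ≤ fun ω => Z t ω ^ 2 := fun ω => sq_nonneg _
    have hInt : Integrable (fun ω => Z t ω ^ 2) P := hZ2.integrable t
    have := (integral_eq_zero_iff_of_nonneg hnn hInt).mp hintt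
    filter_upwards [this] with ω h
    have : Z t ω ^ 2 = 0 := h
    exact pow_eq_zero_iff two_ne_zero |>.mp h
  -- `R` = set of right-isolated points of `T`; it is countable
  set R : Set ↥T := {t | ∃ ε > 0, ∀ s : ↥T, (t : ℝ) < s → (t : ℝ) + ε ≤ s} with hRdef
  have hRq : ∀ t ∈ R, ∃ q : ℚ, (t : ℝ) < q ∧ ∀ s : ↥T, (t : ℝ) < s → (q : ℝ) ≤ s := by
    rintro t ⟨ε, hε, hsep⟩
    obtain ⟨q, hq1, hq2⟩ := exists_rat_btwn (lt_add_of_pos_right (t : ℝ) hε)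
    exact ⟨q, hq1, fun s hs => hq2.le.trans (hsep s hs)⟩
  have hRc : R.Countable := by
    choose! f hf1 hf2 using hRq
    refine Set.countable_of_injective_of_countable_image (f := f) ?_ (Set.to_countable _)
    intro x hx y hy hxy
    by_contra hne
    rcases (Subtype.coe_injective.ne hne).lt_or_gt with hlt | hlt
    · have hq : (f x : ℝ) < (f y : ℝ) := (hf2 x hx y hlt).trans_lt (hf1 y hy)
      exact absurd hxy (by exact_mod_cast hq.ne)
    · have hq : (f y : ℝ) < (f x : ℝ) := (hf2 y hy x hlt).trans_lt (hf1 x hx)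
      exact absurd hxy (by exact_mod_cast hq.ne')
  obtain ⟨D0, hD0c, hD0d⟩ := TopologicalSpace.exists_countable_dense ↥T
  set D := D0 ∪ R with hDdef
  have hDc : D.Countable := hD0c.union hRc
  have hae : ∀ᵐ ω ∂P, ∀ d ∈ D, Z d ω = 0 := (ae_ball_iff hDc).mpr fun d _ => key d
  filter_upwards [hae] with ω hω
  intro t
  by_cases ht : t ∈ R
  · exact hω t (Or.inr ht)
  · -- `t` is right-dense: approximate from the right by points of `D`
    have ht' : ∀ ε > (0 : ℝ), ∃ s : ↥T, (t : ℝ) < s ∧ (s : ℝ) < t + ε := by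
      intro ε hε
      rw [hRdef, Set.mem_setOf_eq] at ht
      push_neg at ht
      obtain ⟨s, hs1, hs2⟩ := ht ε hε
      exact ⟨s, hs1, hs2⟩
    set S : Set ↥T := {s : ↥T | s ∈ D ∧ t < s} with hSdef
    have hfreq : ∀ ε > (0 : ℝ), ∃ d ∈ S, dist t d < ε := by
      intro ε hε
      obtain ⟨s, hts, hst⟩ := ht' (ε / 2) (half_pos hε)
      have hpos : (0 : ℝ) < min (ε / 2) ((s : ℝ) - t) := lt_min (half_pos hε) (sub_pos.mpr hts)
      obtain ⟨d, hdD0, hd⟩ := hD0d.exists_dist_lt s hpos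
      have hds : dist (s : ℝ) (d : ℝ) < min (ε / 2) ((s : ℝ) - t) := by
        rwa [Subtype.dist_eq] at hd
      have hdt : (t : ℝ) < d := by
        have h1 : (s : ℝ) - d < (s : ℝ) - t :=
          lt_of_le_of_lt (le_abs_self _) (lt_of_lt_of_le hds (min_le_right _ _))
        linarith
      have hdist : dist t d < ε := by
        rw [Subtype.dist_eq, Real.dist_eq]
        have h2 : |(s : ℝ) - d| < ε / 2 := lt_of_lt_of_le hds (min_le_left _ _)
        rw [abs_lt] at h2 ⊢
        constructor <;> nlinarith
      exact ⟨d, ⟨Or.inl hdD0, Subtype.coe_lt_coe.mp hdt⟩, hdist⟩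
    have hS : t ∈ closure S := Metric.mem_closure_iff.mpr hfreq
    have hne : (nhdsWithin t S).NeBot := mem_closure_iff_nhdsWithin_neBot.mp hS
    have h1 : Tendsto (fun s : ↥T => Z s ω) (nhdsWithin t S) (nhds (Z t ω)) :=
      (hrc ω t).mono_left (nhdsWithin_mono t fun s hs => le_of_lt hs.2)
    have h2 : Tendsto (fun s : ↥T => Z s ω) (nhdsWithin t S) (nhds (0 : ℝ)) := by
      refine Tendsto.congr' ?_ tendsto_const_nhds
      filter_upwards [self_mem_nhdsWithin] with s hs
      exact (hω s hs.1).symm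
    exact tendsto_nhds_unique h1 h2
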